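/- arXiv:1611.09639 — 4 statements merged into one kernel-verified Lean document; each statement's English description precedes it below -/
import Mathlib

section
/- Let V be a finite-dimensional normed real vector space and let 0 < ρ ≤ 1/2. If A ⊆ B(0, ρ^{-1}) is ρ-away from linear subspaces, then A contains a ρ-almost orthonormal basis of V. Conversely, there exist constants C ≥ 1 and c > 0 depending only on V such that if A contains a ρ-almost orthonormal basis of V, then A is cρ^C-away from linear subspaces. -/
open Pointwise

/-- `A` is `ρ`-away from linear subspaces: every proper linear subspace of `V` has a point
of `A` at distance at least `ρ` from it. -/
def AwayFromSubspaces {V : Type*} [NormedAddCommGroup V] [NormedSpace ℝ V]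
    (ρ : ℝ) (A : Set V) : Prop :=
  ∀ W : Submodule ℝ V, W ≠ ⊤ → ∃ a ∈ A, ρ ≤ Metric.infDist a (W : Set V)

/-- `(a_1, …, a_n)` is a `ρ`-almost orthonormal family: every `a_k` has norm at most `ρ⁻¹`
and is at distance at least `ρ` from the span of the previous vectors. -/
def AlmostONB {V : Type*} [NormedAddCommGroup V] [NormedSpace ℝ V] (ρ : ℝ)
    {n : ℕ} (a : Fin n → V) : Prop :=
  ∀ k : Fin n, ‖a k‖ ≤ ρ⁻¹ ∧
    ρ ≤ Metric.infDist (a k) (Submodule.span ℝ (a '' {j | j < k}) : Set V)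

open Metric Submodule Module

section Aux

variable {V : Type*} [NormedAddCommGroup V] [NormedSpace ℝ V]

set_option linter.unusedSectionVars false

private lemma snoc_image_lt_castSucc' {m : ℕ} (a : Fin m → V) (x : V) (i : Fin m) :
    (Fin.snoc a x : Fin (m + 1) → V) '' {j | j < Fin.castSucc i} = a '' {j | j < i} := by
  ext y
  constructor
  · rintro ⟨j, hj, rfl⟩
    have hj' : (j : ℕ) < (i : ℕ) := hj
    have hne : j ≠ Fin.last m := by
      intro h; rw [h] at hj'; simp at hj'; omega
    obtain ⟨i', rfl⟩ : ∃ i', j = Fin.castSucc i' :=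
      ⟨j.castPred hne, (Fin.castSucc_castPred j hne).symm⟩
    exact ⟨i', Fin.lt_def.mpr (by simpa using hj'), by simp⟩
  · rintro ⟨j, hj, rfl⟩
    exact ⟨Fin.castSucc j, by simpa [Fin.castSucc_lt_castSucc_iff] using hj, by simp⟩

private lemma snoc_image_lt_last' {m : ℕ} (a : Fin m → V) (x : V) :
    (Fin.snoc a x : Fin (m + 1) → V) '' {j | j < Fin.last m} = Set.range a := by
  ext y
  constructor
  · rintro ⟨j, hj, rfl⟩
    have hne : j ≠ Fin.last m := ne_of_lt hj
    obtain ⟨i', rfl⟩ : ∃ i', j = Fin.castSucc i' :=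
      ⟨j.castPred hne, (Fin.castSucc_castPred j hne).symm⟩
    exact ⟨i', by simp⟩
  · rintro ⟨i, rfl⟩
    exact ⟨Fin.castSucc i, Fin.castSucc_lt_last i, by simp⟩

private lemma part1' [FiniteDimensional ℝ V] {ρ : ℝ} (A : Set V)
    (hA : A ⊆ Metric.closedBall 0 ρ⁻¹)
    (haway : ∀ W : Submodule ℝ V, W ≠ ⊤ → ∃ a ∈ A, ρ ≤ Metric.infDist a (W : Set V)) :
    ∀ m : ℕ, m ≤ finrank ℝ V → ∃ a : Fin m → V, (∀ k, a k ∈ A) ∧ AlmostONB ρ a := by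
  intro m
  induction m with
  | zero => exact fun _ => ⟨Fin.elim0, fun k => k.elim0, fun k => k.elim0⟩
  | succ m ih =>
    intro hm
    obtain ⟨a, haA, haonb⟩ := ih (by omega)
    have hWtop : Submodule.span ℝ (Set.range a) ≠ ⊤ := by
      intro h
      have h1 : finrank ℝ (Submodule.span ℝ (Set.range a)) ≤ m := by
        simpa [Set.finrank] using finrank_range_le_card (R := ℝ) a
      rw [h, finrank_top] at h1
      omega
    obtain ⟨x, hxA, hxd⟩ := haway _ hWtop
    refine ⟨Fin.snoc a x, ?_, ?_⟩
    · intro k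
      refine Fin.lastCases ?_ ?_ k
      · rw [Fin.snoc_last]; exact hxA
      · intro i; rw [Fin.snoc_castSucc]; exact haA i
    · intro k
      refine Fin.lastCases ?_ ?_ k
      · constructor
        · rw [Fin.snoc_last]
          have := hA hxA
          rwa [Metric.mem_closedBall, dist_zero_right] at this
        · rw [Fin.snoc_last, snoc_image_lt_last']
          exact hxd
      · intro i
        constructor
        · rw [Fin.snoc_castSucc]; exact (haonb i).1
        · rw [Fin.snoc_castSucc, snoc_image_lt_castSucc']
          exact (haonb i).2

private lemma key_coeff' {n : ℕ} {ρ : ℝ} (hρ : 0 < ρ) {a : Fin n → V}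
    (ha : AlmostONB ρ a) :
    ∀ m : ℕ, ∀ c : Fin n → ℝ, (∀ j : Fin n, m ≤ (j : ℕ) → c j = 0) →
      ∀ j, |c j| ≤ ‖∑ i, c i • a i‖ * (ρ⁻¹ * (1 + ρ⁻¹ * ρ⁻¹) ^ m) := by
  have hρinv : (0:ℝ) < ρ⁻¹ := inv_pos.mpr hρ
  have hQ1 : (1:ℝ) ≤ 1 + ρ⁻¹ * ρ⁻¹ := by nlinarith
  intro m
  induction m with
  | zero =>
    intro c hc j
    rw [hc j (Nat.zero_le _)]
    simp only [abs_zero]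
    positivity
  | succ m ih =>
    intro c hc j
    by_cases hm : m < n
    case neg =>
      have hc' : ∀ j : Fin n, m ≤ (j : ℕ) → c j = 0 := by
        intro j hj
        exact absurd j.isLt (by omega)
      refine le_trans (ih c hc' j) ?_
      have hpow : (1 + ρ⁻¹ * ρ⁻¹) ^ m ≤ (1 + ρ⁻¹ * ρ⁻¹) ^ (m + 1) :=
        pow_le_pow_right₀ hQ1 (Nat.le_succ m)
      exact mul_le_mul_of_nonneg_left
        (mul_le_mul_of_nonneg_left hpow hρinv.le) (norm_nonneg _)
    case pos =>
      set km : Fin n := ⟨m, hm⟩ with hkm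
      have hkmval : (km : ℕ) = m := rfl
      set v := ∑ i, c i • a i with hv
      set u := ∑ i ∈ Finset.univ.erase km, c i • a i with hu
      have hvu : v = c km • a km + u :=
        (Finset.add_sum_erase _ (fun i => c i • a i) (Finset.mem_univ km)).symm
      have humem : u ∈ Submodule.span ℝ (a '' {j | j < km}) := by
        apply Submodule.sum_mem
        intro i hi
        have hine : i ≠ km := Finset.ne_of_mem_erase hi
        by_cases hilt : i < km
        · exact Submodule.smul_mem _ _ (Submodule.subset_span ⟨i, hilt, rfl⟩)
        · have hge : (m+1) ≤ (i : ℕ) := by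
            rw [Fin.lt_def] at hilt
            have hne' : (i:ℕ) ≠ m := fun h => hine (Fin.ext (h.trans hkmval.symm))
            omega
          rw [hc i hge, zero_smul]
          exact Submodule.zero_mem _
      have hckm : |c km| ≤ ‖v‖ * ρ⁻¹ := by
        by_cases hczero : c km = 0
        · rw [hczero]; simp only [abs_zero]; positivity
        · have hdist : ∀ w ∈ (Submodule.span ℝ (a '' {j | j < km}) : Set V),
              ρ ≤ ‖a km - w‖ := by
            intro w hw
            refine le_trans (ha km).2 ?_
            rw [← dist_eq_norm]
            exact Metric.infDist_le_dist_of_mem hw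
          have hw : (-(c km)⁻¹) • u ∈ Submodule.span ℝ (a '' {j | j < km}) :=
            Submodule.smul_mem _ _ humem
          have h1 : ρ ≤ ‖a km - (-(c km)⁻¹) • u‖ := hdist _ hw
          have h3 : c km • (a km - (-(c km)⁻¹) • u) = v := by
            rw [smul_sub, smul_smul, hvu]
            field_simp
            simp [sub_neg_eq_add]
          have h4 : |c km| * ‖a km - (-(c km)⁻¹) • u‖ = ‖v‖ := by
            rw [← h3, norm_smul, Real.norm_eq_abs]
          have h2 : |c km| * ρ ≤ ‖v‖ := by
            rw [← h4]
            exact mul_le_mul_of_nonneg_left h1 (abs_nonneg _)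
          rw [← div_eq_mul_inv, le_div_iff₀ hρ]
          exact h2
      set c' := Function.update c km 0 with hc'def
      have huc' : ∑ i, c' i • a i = u := by
        rw [← Finset.add_sum_erase _ (fun i => c' i • a i) (Finset.mem_univ km)]
        rw [hc'def]
        simp only [Function.update_self, zero_smul, zero_add]
        apply Finset.sum_congr rfl
        intro i hi
        rw [Function.update_of_ne (Finset.ne_of_mem_erase hi)]
      have hc'zero : ∀ j : Fin n, m ≤ (j : ℕ) → c' j = 0 := by
        intro j hj
        by_cases hjk : j = km
        · rw [hjk, hc'def, Function.update_self]
        · rw [hc'def, Function.update_of_ne hjk]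
          have hne' : (j:ℕ) ≠ m := fun h => hjk (Fin.ext (h.trans hkmval.symm))
          exact hc j (by omega)
      have hnormu : ‖u‖ ≤ ‖v‖ * (1 + ρ⁻¹ * ρ⁻¹) := by
        have huv : u = v - c km • a km := by rw [hvu]; abel
        rw [huv]
        calc ‖v - c km • a km‖ ≤ ‖v‖ + ‖c km • a km‖ := norm_sub_le _ _
          _ = ‖v‖ + |c km| * ‖a km‖ := by rw [norm_smul, Real.norm_eq_abs]
          _ ≤ ‖v‖ + (‖v‖ * ρ⁻¹) * ρ⁻¹ :=
              add_le_add_right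
                (mul_le_mul hckm (ha km).1 (norm_nonneg _) (by positivity)) ‖v‖
          _ = ‖v‖ * (1 + ρ⁻¹ * ρ⁻¹) := by ring
      by_cases hjk : j = km
      · rw [hjk]
        have hpone : (1:ℝ) ≤ (1 + ρ⁻¹ * ρ⁻¹) ^ (m+1) := one_le_pow₀ hQ1
        calc |c km| ≤ ‖v‖ * ρ⁻¹ := hckm
          _ = ‖v‖ * (ρ⁻¹ * 1) := by ring
          _ ≤ ‖v‖ * (ρ⁻¹ * (1 + ρ⁻¹ * ρ⁻¹) ^ (m+1)) :=
              mul_le_mul_of_nonneg_left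
                (mul_le_mul_of_nonneg_left hpone hρinv.le) (norm_nonneg _)
      · have hih := ih c' hc'zero j
        rw [huc', hc'def, Function.update_of_ne hjk] at hih
        calc |c j| ≤ ‖u‖ * (ρ⁻¹ * (1 + ρ⁻¹ * ρ⁻¹) ^ m) := hih
          _ ≤ (‖v‖ * (1 + ρ⁻¹ * ρ⁻¹)) * (ρ⁻¹ * (1 + ρ⁻¹ * ρ⁻¹) ^ m) :=
              mul_le_mul_of_nonneg_right hnormu (by positivity)
          _ = ‖v‖ * (ρ⁻¹ * (1 + ρ⁻¹ * ρ⁻¹) ^ (m+1)) := by ring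

private lemma part2' [FiniteDimensional ℝ V] :
    ∃ C : ℝ, 1 ≤ C ∧ ∃ c : ℝ, 0 < c ∧
      ∀ ρ : ℝ, 0 < ρ → ρ ≤ 1 / 2 →
        ∀ A : Set V,
          (∃ a : Fin (finrank ℝ V) → V, (∀ k, a k ∈ A) ∧ AlmostONB ρ a) →
          ∀ W : Submodule ℝ V, W ≠ ⊤ →
            ∃ a ∈ A, c * ρ ^ (C : ℝ) ≤ Metric.infDist a (W : Set V) := by
  set n := finrank ℝ V with hn
  by_cases hn0 : n = 0
  · refine ⟨1, le_refl 1, 1, one_pos, ?_⟩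
    intro ρ hρ hρ2 A _ W hW
    have hsub : Subsingleton V := finrank_zero_iff.mp hn0
    exact absurd (Submodule.eq_top_iff'.mpr fun x => by
      rw [Subsingleton.elim x 0]; exact W.zero_mem) hW
  · refine ⟨((2 * n + 1 : ℕ) : ℝ), by exact_mod_cast Nat.one_le_iff_ne_zero.mpr (by omega),
      ((n : ℝ) * 2 ^ n * 4)⁻¹, by positivity, ?_⟩
    intro ρ hρ hρ2 A ⟨a, haA, ha⟩ W hW
    set c : ℝ := ((n : ℝ) * 2 ^ n * 4)⁻¹ with hc
    set C : ℝ := ((2 * n + 1 : ℕ) : ℝ) with hCdef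
    by_contra hcon
    push_neg at hcon
    set ε : ℝ := c * ρ ^ (C:ℝ) with hε
    have hεpos : 0 < ε := mul_pos (by positivity) (Real.rpow_pos_of_pos hρ _)
    have hεlt : ∀ k, Metric.infDist (a k) (W : Set V) < ε := fun k => hcon _ (haA k)
    have hli : LinearIndependent ℝ a := by
      rw [Fintype.linearIndependent_iff]
      intro g hg i
      have hb := key_coeff' hρ ha n g (fun j hj => absurd j.isLt (by omega)) i
      rw [hg, norm_zero, zero_mul] at hb
      exact abs_eq_zero.mp (le_antisymm hb (abs_nonneg _))
    haveI : Nonempty (Fin n) := ⟨⟨0, by omega⟩⟩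
    set b := basisOfLinearIndependentOfCardEqFinrank hli (by simp [hn]) with hbdef
    have hbcoe : ⇑b = a := coe_basisOfLinearIndependentOfCardEqFinrank _ _
    have hWc : IsClosed (W : Set V) := Submodule.closed_of_finiteDimensional W
    have hex : ∃ x : V, x ∉ W := by
      by_contra h; push_neg at h; exact hW (Submodule.eq_top_iff'.mpr h)
    obtain ⟨x₀, hx₀, hx₀d⟩ := riesz_lemma hWc hex (show (2⁻¹ : ℝ) < 1 by norm_num)
    have hx₀pos : 0 < ‖x₀‖ := norm_pos_iff.mpr (fun h => hx₀ (h ▸ W.zero_mem))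
    set g : Fin n → ℝ := fun i => b.repr x₀ i with hg
    have hrepr : ∑ i, g i • a i = x₀ := by
      rw [← hbcoe]; exact b.sum_repr x₀
    set M : ℝ := ‖x₀‖ * (ρ⁻¹ * (1 + ρ⁻¹ * ρ⁻¹) ^ n) with hM
    have hgb : ∀ i, |g i| ≤ M := by
      intro i
      have hb2 := key_coeff' hρ ha n g (fun j hj => absurd j.isLt (by omega)) i
      rwa [hrepr] at hb2
    choose w hwmem hwd using fun k =>
      (Metric.infDist_lt_iff ⟨0, W.zero_mem⟩).mp (hεlt k)
    set wtot : V := ∑ i, g i • w i with hwtot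
    have hwtotW : wtot ∈ W := Submodule.sum_mem _ fun i _ => Submodule.smul_mem _ _ (hwmem i)
    have key : 2⁻¹ * ‖x₀‖ ≤ ‖x₀ - wtot‖ := hx₀d wtot hwtotW
    have hsum : ‖x₀ - wtot‖ ≤ (n : ℝ) * (M * ε) := by
      have e1 : x₀ - wtot = ∑ i, g i • (a i - w i) := by
        rw [← hrepr, hwtot, ← Finset.sum_sub_distrib]
        exact Finset.sum_congr rfl fun i _ => (smul_sub _ _ _).symm
      rw [e1]
      calc ‖∑ i, g i • (a i - w i)‖ ≤ ∑ i, ‖g i • (a i - w i)‖ := norm_sum_le _ _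
        _ ≤ ∑ _i : Fin n, M * ε := by
            apply Finset.sum_le_sum
            intro i _
            rw [norm_smul, Real.norm_eq_abs]
            have hd : ‖a i - w i‖ ≤ ε := by
              rw [← dist_eq_norm]; exact (hwd i).le
            exact mul_le_mul (hgb i) hd (norm_nonneg _)
              (le_trans (abs_nonneg _) (hgb i))
        _ = (n : ℝ) * (M * ε) := by
            rw [Finset.sum_const, Finset.card_univ, Fintype.card_fin, nsmul_eq_mul]
    have h2ρ : (2 : ℝ) ≤ ρ⁻¹ := by
      have := inv_anti₀ hρ hρ2
      norm_num at this
      linarith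
    have hrpow : ρ ^ (C : ℝ) = ρ ^ (2 * n + 1 : ℕ) := by
      rw [hCdef, Real.rpow_natCast]
    have hNum : (n : ℝ) * ((ρ⁻¹ * (1 + ρ⁻¹ * ρ⁻¹) ^ n) * ε) ≤ 4⁻¹ := by
      have hρne : ρ ≠ 0 := ne_of_gt hρ
      have hQle : (1 + ρ⁻¹ * ρ⁻¹) ≤ 2 * (ρ⁻¹ * ρ⁻¹) := by nlinarith
      have hQn : (1 + ρ⁻¹ * ρ⁻¹) ^ n ≤ (2 * (ρ⁻¹ * ρ⁻¹)) ^ n :=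
        pow_le_pow_left₀ (by positivity) hQle n
      have hnne : (n : ℝ) ≠ 0 := Nat.cast_ne_zero.mpr hn0
      have e2 : (n : ℝ) * ((ρ⁻¹ * (2 * (ρ⁻¹ * ρ⁻¹)) ^ n) * (c * ρ ^ (2 * n + 1 : ℕ))) = 4⁻¹ := by
        rw [hc]
        field_simp
        rw [div_pow, ← pow_mul, pow_succ, ← mul_assoc, div_mul_cancel₀ _ (pow_ne_zero _ hρne), mul_comm]
      calc (n : ℝ) * ((ρ⁻¹ * (1 + ρ⁻¹ * ρ⁻¹) ^ n) * ε)
          ≤ (n : ℝ) * ((ρ⁻¹ * (2 * (ρ⁻¹ * ρ⁻¹)) ^ n) * ε) := by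
            apply mul_le_mul_of_nonneg_left _ (Nat.cast_nonneg n)
            exact mul_le_mul_of_nonneg_right
              (mul_le_mul_of_nonneg_left hQn (by positivity)) hεpos.le
        _ = 4⁻¹ := by rw [hε, hrpow]; exact e2
    have hfinal : 2⁻¹ * ‖x₀‖ ≤ 4⁻¹ * ‖x₀‖ := by
      calc 2⁻¹ * ‖x₀‖ ≤ (n : ℝ) * (M * ε) := le_trans key hsum
        _ = ((n : ℝ) * ((ρ⁻¹ * (1 + ρ⁻¹ * ρ⁻¹) ^ n) * ε)) * ‖x₀‖ := by rw [hM]; ring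
        _ ≤ 4⁻¹ * ‖x₀‖ := mul_le_mul_of_nonneg_right hNum (norm_nonneg _)
    nlinarith

end Aux

/-- **Lemma 2.4**: a subset of `B(0, ρ⁻¹)` which is `ρ`-away from linear subspaces contains
a `ρ`-almost orthonormal basis; conversely (with constants `C`, `c` depending only on `V`),
a set containing a `ρ`-almost orthonormal basis is `c ρ^C`-away from linear subspaces. -/
theorem away_from_subspaces_iff_almost_orthonormal_basis
    {V : Type*} [NormedAddCommGroup V] [NormedSpace ℝ V] [FiniteDimensional ℝ V] :
    (∀ ρ : ℝ, 0 < ρ → ρ ≤ 1 / 2 →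
      ∀ A : Set V, A ⊆ Metric.closedBall 0 ρ⁻¹ → AwayFromSubspaces ρ A →
        ∃ a : Fin (Module.finrank ℝ V) → V, (∀ k, a k ∈ A) ∧ AlmostONB ρ a) ∧
    (∃ C : ℝ, 1 ≤ C ∧ ∃ c : ℝ, 0 < c ∧
      ∀ ρ : ℝ, 0 < ρ → ρ ≤ 1 / 2 →
        ∀ A : Set V,
          (∃ a : Fin (Module.finrank ℝ V) → V, (∀ k, a k ∈ A) ∧ AlmostONB ρ a) →
          AwayFromSubspaces (c * ρ ^ C) A) := by
  constructor
  · intro ρ hρ hρ2 A hA haway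
    exact part1' A hA haway _ le_rfl
  · obtain ⟨C, hC, c, hc, h⟩ := part2' (V := V)
    exact ⟨C, hC, c, hc, fun ρ hρ hρ2 A hex W hW => h ρ hρ hρ2 A hex W hW⟩
end

section
/- Let V be a finite-dimensional normed real vector space of dimension n and let τ : V × V → ℝ be a non-degenerate bilinear form. There exist constants K ≥ 1 and C ≥ 1 depending on V and τ such that for every 0 < ρ ≤ 1/2: if (a_1, …, a_n) is a ρ-almost orthonormal basis of V, then for every x ∈ V, ‖x‖ ≤ K ρ^{-C} · max_{1 ≤ i ≤ n} |τ(a_i, x)|. -/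
open Pointwise

lemma almostONB_castSucc {V : Type*} [NormedAddCommGroup V] [NormedSpace ℝ V] {ρ : ℝ}
    {n : ℕ} {a : Fin (n + 1) → V} (h : AlmostONB ρ a) :
    AlmostONB ρ (a ∘ Fin.castSucc) := by
  intro k
  have hset : (a ∘ Fin.castSucc) '' {j | j < k} = a '' {j | j < Fin.castSucc k} := by
    ext y
    simp only [Set.mem_image, Function.comp_apply, Set.mem_setOf_eq]
    constructor
    · rintro ⟨j, hj, rfl⟩
      exact ⟨j.castSucc, Fin.castSucc_lt_castSucc_iff.mpr hj, rfl⟩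
    · rintro ⟨j, hj, rfl⟩
      have hjk : j.val < k.val := by simpa [Fin.lt_def] using hj
      have hjn : j.val < n := hjk.trans k.isLt
      refine ⟨⟨j.val, hjn⟩, by simpa [Fin.lt_def] using hjk, ?_⟩
      congr 1
  refine ⟨(h k.castSucc).1, le_trans (h k.castSucc).2 (le_of_eq ?_)⟩
  rw [hset]
  rfl

lemma coeff_bound {V : Type*} [NormedAddCommGroup V] [NormedSpace ℝ V] {ρ : ℝ}
    (hρ0 : 0 < ρ) (hρ1 : ρ ≤ 1) :
    ∀ {n : ℕ} {a : Fin n → V}, AlmostONB ρ a → ∀ c : Fin n → ℝ, ∀ k : Fin n,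
      |c k| ≤ (2 * ρ⁻¹ ^ 3) ^ n * ‖∑ i, c i • a i‖ := by
  have hρinv : 1 ≤ ρ⁻¹ := (one_le_inv₀ hρ0).mpr hρ1
  have hρinv0 : 0 < ρ⁻¹ := inv_pos.mpr hρ0
  have hρ3 : 1 ≤ ρ⁻¹ ^ 3 := one_le_pow₀ hρinv
  have hD1 : 1 ≤ 2 * ρ⁻¹ ^ 3 := by nlinarith
  intro n
  induction n with
  | zero => intro a _ c k; exact k.elim0
  | succ n ih =>
    intro a ha c
    set v := ∑ i, c i • a i with hv
    have hv0 : 0 ≤ ‖v‖ := norm_nonneg _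
    have hwmem : v - c (Fin.last n) • a (Fin.last n) =
        ∑ i : Fin n, (c ∘ Fin.castSucc) i • (a ∘ Fin.castSucc) i := by
      rw [hv, Fin.sum_univ_castSucc]
      simp
    have hlast : |c (Fin.last n)| ≤ ρ⁻¹ * ‖v‖ := by
      by_cases hc : c (Fin.last n) = 0
      · simp [hc]; positivity
      · set W := Submodule.span ℝ (a '' {j | j < Fin.last n}) with hW
        have hw : v - c (Fin.last n) • a (Fin.last n) ∈ W := by
          rw [hwmem]
          refine Submodule.sum_mem _ (fun i _ => Submodule.smul_mem _ _ ?_)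
          exact Submodule.subset_span ⟨i.castSucc, by simp [Fin.lt_def, i.isLt], rfl⟩
        have hz : (-(c (Fin.last n))⁻¹) • (v - c (Fin.last n) • a (Fin.last n)) ∈ W :=
          Submodule.smul_mem _ _ hw
        have h1 : ρ ≤ Metric.infDist (a (Fin.last n)) (W : Set V) := (ha (Fin.last n)).2
        have h2 : Metric.infDist (a (Fin.last n)) (W : Set V) ≤
            ‖a (Fin.last n) - (-(c (Fin.last n))⁻¹) • (v - c (Fin.last n) • a (Fin.last n))‖ := by
          rw [← dist_eq_norm]
          exact Metric.infDist_le_dist_of_mem hz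
        have h3 : a (Fin.last n) - (-(c (Fin.last n))⁻¹) • (v - c (Fin.last n) • a (Fin.last n))
            = (c (Fin.last n))⁻¹ • v := by
          rw [neg_smul, sub_neg_eq_add, smul_sub, smul_smul, inv_mul_cancel₀ hc, one_smul]
          abel
        rw [h3, norm_smul, norm_inv, Real.norm_eq_abs] at h2
        have habs : 0 < |c (Fin.last n)| := abs_pos.2 hc
        have h4 : ρ * |c (Fin.last n)| ≤ ‖v‖ := by
          have h5 := mul_le_mul_of_nonneg_right (le_trans h1 h2) habs.le
          rwa [mul_comm |c (Fin.last n)|⁻¹ ‖v‖, mul_assoc,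
            inv_mul_cancel₀ habs.ne', mul_one] at h5
        calc |c (Fin.last n)| = ρ⁻¹ * (ρ * |c (Fin.last n)|) := by
              field_simp
          _ ≤ ρ⁻¹ * ‖v‖ := mul_le_mul_of_nonneg_left h4 hρinv0.le
    have ha' : AlmostONB ρ (a ∘ Fin.castSucc) := almostONB_castSucc ha
    have hwnorm : ‖v - c (Fin.last n) • a (Fin.last n)‖ ≤ (2 * ρ⁻¹ ^ 3) * ‖v‖ := by
      have h5 : ‖c (Fin.last n) • a (Fin.last n)‖ ≤ ρ⁻¹ * ‖v‖ * ρ⁻¹ := by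
        rw [norm_smul, Real.norm_eq_abs]
        exact mul_le_mul hlast (ha (Fin.last n)).1 (norm_nonneg _) (by positivity)
      calc ‖v - c (Fin.last n) • a (Fin.last n)‖
          ≤ ‖v‖ + ‖c (Fin.last n) • a (Fin.last n)‖ := norm_sub_le _ _
        _ ≤ ‖v‖ + ρ⁻¹ * ‖v‖ * ρ⁻¹ := by linarith
        _ ≤ (2 * ρ⁻¹ ^ 3) * ‖v‖ := by
            have hh1 : 0 ≤ (ρ⁻¹ - 1) * (ρ⁻¹ ^ 2 * ‖v‖) :=
              mul_nonneg (sub_nonneg.2 hρinv) (mul_nonneg (sq_nonneg ρ⁻¹) hv0)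
            have hh2 : 0 ≤ (ρ⁻¹ ^ 3 - 1) * ‖v‖ := mul_nonneg (sub_nonneg.2 hρ3) hv0
            nlinarith [hh1, hh2]
    intro k
    refine Fin.lastCases ?_ ?_ k
    · calc |c (Fin.last n)| ≤ ρ⁻¹ * ‖v‖ := hlast
        _ ≤ (2 * ρ⁻¹ ^ 3) ^ (n + 1) * ‖v‖ := by
          refine mul_le_mul_of_nonneg_right ?_ hv0
          calc ρ⁻¹ ≤ 2 * ρ⁻¹ ^ 3 := by nlinarith [le_self_pow₀ hρinv (three_ne_zero (α := ℕ))]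
            _ ≤ (2 * ρ⁻¹ ^ 3) ^ (n + 1) := le_self_pow₀ hD1 n.succ_ne_zero
    · intro i
      have hih := ih ha' (c ∘ Fin.castSucc) i
      rw [← hwmem] at hih
      calc |c i.castSucc| ≤ (2 * ρ⁻¹ ^ 3) ^ n * ‖v - c (Fin.last n) • a (Fin.last n)‖ := hih
        _ ≤ (2 * ρ⁻¹ ^ 3) ^ n * ((2 * ρ⁻¹ ^ 3) * ‖v‖) :=
            mul_le_mul_of_nonneg_left hwnorm (by positivity)
        _ = (2 * ρ⁻¹ ^ 3) ^ (n + 1) * ‖v‖ := by ring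

/-- **Lemma 4.2**: if `τ` is a non-degenerate bilinear form on `V` and `(a_i)` is a
`ρ`-almost orthonormal basis, then `‖x‖ ≤ K ρ^{-C} max_i |τ(a_i, x)|` for all `x ∈ V`. -/
theorem norm_bounded_by_bilinear_form_on_almost_orthonormal_basis
    {V : Type*} [NormedAddCommGroup V] [NormedSpace ℝ V] [FiniteDimensional ℝ V]
    (τ : V →ₗ[ℝ] V →ₗ[ℝ] ℝ) (hτ : ∀ x : V, (∀ y : V, τ x y = 0) → x = 0) :
    ∃ K : ℝ, 1 ≤ K ∧ ∃ C : ℝ, 1 ≤ C ∧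
      ∀ ρ : ℝ, 0 < ρ → ρ ≤ 1 / 2 →
        ∀ a : Fin (Module.finrank ℝ V) → V, AlmostONB ρ a →
          ∀ x : V, ‖x‖ ≤ K * ρ ^ (-C) * ⨆ i, |τ (a i) x| := by
  classical
  set n := Module.finrank ℝ V with hn
  -- the linear equivalence `v ↦ τ v ·` from `V` to its continuous dual
  let g : V →ₗ[ℝ] (V →L[ℝ] ℝ) :=
    (LinearMap.toContinuousLinearMap : (V →ₗ[ℝ] ℝ) ≃ₗ[ℝ] (V →L[ℝ] ℝ)).toLinearMap.comp τ
  have hg : ∀ v y, g v y = τ v y := fun v y => rfl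
  have hginj : Function.Injective g := by
    rw [← LinearMap.ker_eq_bot, LinearMap.ker_eq_bot']
    intro v hv
    refine hτ v (fun y => ?_)
    rw [← hg]
    rw [hv]
    rfl
  have hfr : Module.finrank ℝ V = Module.finrank ℝ (V →L[ℝ] ℝ) := by
    rw [(LinearMap.toContinuousLinearMap :
      (V →ₗ[ℝ] ℝ) ≃ₗ[ℝ] (V →L[ℝ] ℝ)).finrank_eq.symm, Module.finrank_linearMap_self]
  have hgsurj : Function.Surjective g :=
    (LinearMap.injective_iff_surjective_of_finrank_eq_finrank hfr).mp hginj
  let E : V ≃ₗ[ℝ] (V →L[ℝ] ℝ) := LinearEquiv.ofBijective g ⟨hginj, hgsurj⟩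
  let S : (V →L[ℝ] ℝ) →L[ℝ] V := LinearMap.toContinuousLinearMap E.symm.toLinearMap
  set M := ‖S‖ with hM
  have hM0 : 0 ≤ M := hM ▸ norm_nonneg S
  have hSE : ∀ f, S f = E.symm f := fun f => rfl
  refine ⟨max 1 ((n : ℝ) * 2 ^ n * M), le_max_left _ _, 3 * (n : ℝ) + 1, by have : (0:ℝ) ≤ (n:ℝ) := Nat.cast_nonneg n; linarith, ?_⟩
  set K := max 1 ((n : ℝ) * 2 ^ n * M) with hK
  set C := 3 * (n : ℝ) + 1 with hC
  intro ρ hρ0 hρhalf a ha x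
  have hρ1 : ρ ≤ 1 := hρhalf.trans (by norm_num)
  have hρinv : 1 ≤ ρ⁻¹ := (one_le_inv₀ hρ0).mpr hρ1
  have hm0 : 0 ≤ ⨆ i, |τ (a i) x| := Real.iSup_nonneg (fun i => abs_nonneg _)
  have hrpow : ρ ^ (-C) = ρ⁻¹ ^ (3 * n + 1) := by
    rw [show (-C) = -((3 * n + 1 : ℕ) : ℝ) by push_cast [hC]; ring,
      Real.rpow_neg hρ0.le, Real.rpow_natCast, inv_pow]
  have hK0 : 0 < K := lt_of_lt_of_le one_pos (le_max_left _ _)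
  have hR0 : 0 < ρ ^ (-C) := Real.rpow_pos_of_pos hρ0 _
  rcases eq_or_ne x 0 with rfl | hx
  · rw [norm_zero]
    exact mul_nonneg (mul_nonneg hK0.le hR0.le) hm0
  · -- a is linearly independent, hence a basis
    have hli : LinearIndependent ℝ a := by
      rw [Fintype.linearIndependent_iff]
      intro c hc i
      have h1 := coeff_bound hρ0 hρ1 ha c i
      rw [hc, norm_zero, mul_zero] at h1
      exact abs_eq_zero.mp (le_antisymm h1 (abs_nonneg _))
    haveI : Nontrivial V := nontrivial_of_ne x 0 hx
    haveI : Nonempty (Fin n) := Fin.pos_iff_nonempty.mp (hn ▸ Module.finrank_pos)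
    let b : Module.Basis (Fin n) ℝ V := basisOfLinearIndependentOfCardEqFinrank hli (by simp [hn])
    obtain ⟨f, hf1, hfx⟩ := exists_dual_vector ℝ x (norm_ne_zero_iff.mpr hx)
    set v := E.symm f with hvdef
    have hτv : ∀ y, τ v y = f y := by
      intro y
      have h1 : g v = f := E.apply_symm_apply f
      rw [← hg, h1]
    have hvM : ‖v‖ ≤ M := by
      have := S.le_opNorm f
      rwa [hSE, hf1, mul_one] at this
    have hrepr : ∑ i, b.repr v i • a i = v := by
      have h1 := b.sum_repr v
      simpa [b, coe_basisOfLinearIndependentOfCardEqFinrank] using h1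
    have hcoef : ∀ i, |b.repr v i| ≤ (2 * ρ⁻¹ ^ 3) ^ n * M := by
      intro i
      refine (coeff_bound hρ0 hρ1 ha (fun j => b.repr v j) i).trans ?_
      rw [hrepr]
      exact mul_le_mul_of_nonneg_left hvM (by positivity)
    have hmle : ∀ i, |τ (a i) x| ≤ ⨆ j, |τ (a j) x| :=
      fun i => le_ciSup (f := fun j => |τ (a j) x|) (Set.finite_range _).bddAbove i
    have hxf : ‖x‖ = f x := hfx.symm
    have hτsum : f x = ∑ i, b.repr v i * τ (a i) x := by
      rw [← hτv]
      conv_lhs => rw [← hrepr]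
      simp [LinearMap.sum_apply]
    have hkey : ‖x‖ ≤ (n : ℝ) * ((2 * ρ⁻¹ ^ 3) ^ n * M) * ⨆ i, |τ (a i) x| := by
      rw [hxf]
      calc f x ≤ |f x| := le_abs_self _
        _ = |∑ i, b.repr v i * τ (a i) x| := by rw [hτsum]
        _ ≤ ∑ i, |b.repr v i * τ (a i) x| := Finset.abs_sum_le_sum_abs _ _
        _ ≤ ∑ _i : Fin n, ((2 * ρ⁻¹ ^ 3) ^ n * M) * ⨆ j, |τ (a j) x| := by
            refine Finset.sum_le_sum (fun i _ => ?_)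
            rw [abs_mul]
            exact mul_le_mul (hcoef i) (hmle i) (abs_nonneg _)
              (by positivity)
        _ = (n : ℝ) * ((2 * ρ⁻¹ ^ 3) ^ n * M) * ⨆ i, |τ (a i) x| := by
            rw [Finset.sum_const, Finset.card_univ, Fintype.card_fin, nsmul_eq_mul]; ring
    refine hkey.trans (mul_le_mul_of_nonneg_right ?_ hm0)
    have hexp : (2 * ρ⁻¹ ^ 3) ^ n = 2 ^ n * ρ⁻¹ ^ (3 * n) := by
      rw [mul_pow, ← pow_mul, mul_comm 3 n]
    rw [hrpow, hexp]
    calc (n : ℝ) * (2 ^ n * ρ⁻¹ ^ (3 * n) * M)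
        = ((n : ℝ) * 2 ^ n * M) * ρ⁻¹ ^ (3 * n) := by ring
      _ ≤ K * ρ⁻¹ ^ (3 * n + 1) := by
          refine mul_le_mul (le_max_right _ _) (pow_le_pow_right₀ hρinv (by omega)) (by positivity)
            hK0.le
end

section
/- Let n be a positive integer and 0 < ρ ≤ 1. For every g ∈ SL_n(ℝ) with operator norm ‖g‖ > ρ^{-n}, the centralizer algebra C(g) = {y ∈ Mat_n(ℝ) : gy = yg} does not act ρ-irreducibly on ℝⁿ; that is, there exists a nonzero proper linear subspace W of ℝⁿ such that for every x ∈ C(g) with ‖x‖ ≤ 1 and every w ∈ W with ‖w‖ ≤ 1, dist(xw, W) < ρ. -/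
open Finset in
open Finset in
private lemma gap_aux' {n : ℕ} {r : ℝ} (hr0 : 0 < r) (hr1 : r ≤ 1) (μ : Fin n → ℝ)
    (hprod : ∏ j, μ j = 1)
    (j0 : Fin n) (hbig : (r ^ n)⁻¹ < μ j0) :
    ∃ c : ℝ, 0 < c ∧ (∃ j, c ≤ μ j) ∧ (∃ j, μ j < c) ∧
      ∀ j, μ j < c → μ j < r * c := by
  classical
  have hm0 : 0 < μ j0 := lt_trans (by positivity) hbig
  set S : ℕ → Finset (Fin n) := fun k => Finset.univ.filter (fun j => r ^ k * μ j0 ≤ μ j)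
    with hS
  have hmono : ∀ k, S k ⊆ S (k + 1) := by
    intro k j hj
    simp only [hS, Finset.mem_filter, Finset.mem_univ, true_and] at hj ⊢
    have h1 : r ^ (k + 1) ≤ r ^ k := pow_le_pow_of_le_one hr0.le hr1 (Nat.le_succ k)
    nlinarith
  have hj0mem : ∀ k, j0 ∈ S k := by
    intro k
    simp only [hS, Finset.mem_filter, Finset.mem_univ, true_and]
    have h1 : r ^ k ≤ 1 := pow_le_one₀ hr0.le hr1
    nlinarith
  have hexists : ∃ k < n, S k = S (k + 1) := by
    by_contra hcon
    push_neg at hcon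
    have hcard : ∀ k, k ≤ n → k + 1 ≤ (S k).card := by
      intro k
      induction k with
      | zero => exact fun _ => Finset.card_pos.mpr ⟨j0, hj0mem 0⟩
      | succ k ih =>
        intro hk
        have h1 := ih (le_trans (Nat.le_succ k) hk)
        have hss : S k ⊂ S (k + 1) :=
          (hmono k).ssubset_of_ne (hcon k (by omega))
        have := Finset.card_lt_card hss
        omega
    have h2 := hcard n le_rfl
    have hle := Finset.card_le_univ (S n)
    simp only [Finset.card_univ, Fintype.card_fin] at hle
    omega
  obtain ⟨k, hkn, hSk⟩ := hexists
  have hc0 : 0 < r ^ k * μ j0 := by positivity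
  refine ⟨r ^ k * μ j0, hc0, ⟨j0, ?_⟩, ?_, ?_⟩
  · have := hj0mem k
    simpa only [hS, Finset.mem_filter, Finset.mem_univ, true_and] using this
  · by_contra hall
    push_neg at hall
    have hc1 : 1 < r ^ k * μ j0 := by
      have h1 : r ^ n ≤ r ^ k := pow_le_pow_of_le_one hr0.le hr1 hkn.le
      have hn0 : 0 < r ^ n := by positivity
      calc (1:ℝ) = r ^ n * (r ^ n)⁻¹ := by field_simp
        _ ≤ r ^ k * (r ^ n)⁻¹ := by
            apply mul_le_mul_of_nonneg_right h1 (by positivity)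
        _ < r ^ k * μ j0 := by
            apply mul_lt_mul_of_pos_left hbig (by positivity)
    have hpn : (1:ℝ) < (r ^ k * μ j0) ^ n := one_lt_pow₀ hc1 (by omega)
    have hprodge : (r ^ k * μ j0) ^ n ≤ ∏ j, μ j := by
      calc (r ^ k * μ j0) ^ n = ∏ _j : Fin n, (r ^ k * μ j0) := by
            rw [Finset.prod_const, Finset.card_univ, Fintype.card_fin]
        _ ≤ ∏ j, μ j := Finset.prod_le_prod (fun _ _ => hc0.le) (fun j _ => hall j)
    rw [hprod] at hprodge
    linarith
  · intro j hj
    have hjn : j ∉ S k := by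
      simp only [hS, Finset.mem_filter, Finset.mem_univ, true_and, not_le]
      exact hj
    rw [hSk] at hjn
    simp only [hS, Finset.mem_filter, Finset.mem_univ, true_and, not_le] at hjn
    calc μ j < r ^ (k + 1) * μ j0 := hjn
      _ = r * (r ^ k * μ j0) := by ring

set_option maxHeartbeats 1000000 in
/-- **Lemma 5.3**: if `g` has determinant `1` and operator norm greater than `ρ^{-n}`, then
the centralizer of `g` in `End(ℝⁿ)` does not act `ρ`-irreducibly on `ℝⁿ`. -/
theorem centralizer_of_large_matrix_not_irreducible (n : ℕ) (hn : 0 < n)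
    (ρ : ℝ) (hρ0 : 0 < ρ) (hρ1 : ρ ≤ 1)
    (g : EuclideanSpace ℝ (Fin n) →L[ℝ] EuclideanSpace ℝ (Fin n))
    (hdet : LinearMap.det (g : EuclideanSpace ℝ (Fin n) →ₗ[ℝ] EuclideanSpace ℝ (Fin n)) = 1)
    (hg : (ρ ^ n)⁻¹ < ‖g‖) :
    ∃ W : Submodule ℝ (EuclideanSpace ℝ (Fin n)), W ≠ ⊥ ∧ W ≠ ⊤ ∧
      ∀ x : EuclideanSpace ℝ (Fin n) →L[ℝ] EuclideanSpace ℝ (Fin n),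
        g * x = x * g → ‖x‖ ≤ 1 →
          ∀ w ∈ W, ‖w‖ ≤ 1 →
            Metric.infDist (x w) (W : Set (EuclideanSpace ℝ (Fin n))) < ρ := by
  classical
  set E := EuclideanSpace ℝ (Fin n) with hE
  have hfr : Module.finrank ℝ E = n := finrank_euclideanSpace_fin
  set g' : E →ₗ[ℝ] E := (g : E →ₗ[ℝ] E) with hg'
  set T : E →ₗ[ℝ] E := LinearMap.adjoint g' * g' with hTdef
  have hT : T.IsSymmetric := LinearMap.isSymmetric_adjoint_mul_self g'
  set e := hT.eigenvectorBasis hfr with he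
  set μ := hT.eigenvalues hfr with hμdef
  have happ : ∀ (v : E) (j : Fin n), e.repr (T v) j = μ j * e.repr v j := fun v j =>
    hT.eigenvectorBasis_apply_self_apply hfr v j
  -- key identities
  have key : ∀ v : E, ‖g v‖ ^ 2 = ∑ j, μ j * (e.repr v j) ^ 2 := by
    intro v
    have h1 : (‖g v‖ : ℝ) ^ 2 = (inner ℝ (T v) v : ℝ) := by
      rw [hTdef, Module.End.mul_apply, LinearMap.adjoint_inner_left,
        real_inner_self_eq_norm_sq]
      rfl
    rw [h1, ← e.repr.inner_map_map (T v) v]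
    simp only [PiLp.inner_apply, RCLike.inner_apply, conj_trivial]
    exact Finset.sum_congr rfl fun j _ => by rw [happ v j]; ring
  have keyn : ∀ v : E, ‖v‖ ^ 2 = ∑ j, (e.repr v j) ^ 2 := by
    intro v
    rw [← real_inner_self_eq_norm_sq, ← e.repr.inner_map_map v v]
    simp only [PiLp.inner_apply, RCLike.inner_apply, conj_trivial]
    exact Finset.sum_congr rfl fun j _ => by ring
  have hμ : ∀ j, μ j = ‖g (e j)‖ ^ 2 := by
    intro j
    rw [key (e j)]
    have hterm : ∀ i ∈ Finset.univ, μ i * (e.repr (e j) i) ^ 2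
        = if i = j then μ j else 0 := by
      intro i _
      rw [e.repr_self]
      by_cases h : i = j <;> simp [EuclideanSpace.single_apply, h]
    rw [Finset.sum_congr rfl hterm, Finset.sum_ite_eq' Finset.univ j (fun _ => μ j)]
    simp
  have hμ0 : ∀ j, 0 ≤ μ j := fun j => (hμ j) ▸ sq_nonneg _
  -- determinant of T equals 1
  have hdetT : LinearMap.det T = 1 := by
    have hadj : LinearMap.det (LinearMap.adjoint g') = 1 := by
      rw [← LinearMap.det_toMatrix e.toBasis, LinearMap.toMatrix_adjoint e e,
        Matrix.det_conjTranspose, LinearMap.det_toMatrix]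
      rw [hdet]
      simp
    rw [hTdef, map_mul, hadj, hdet, one_mul]
  -- product of eigenvalues is 1
  have hprodμ : ∏ j, μ j = 1 := by
    have hmat : LinearMap.toMatrix e.toBasis e.toBasis T = Matrix.diagonal μ := by
      ext i j
      rw [LinearMap.toMatrix_apply]
      rw [show e.toBasis j = e j from by rw [OrthonormalBasis.coe_toBasis]]
      rw [hT.apply_eigenvectorBasis hfr j]
      rw [e.coe_toBasis_repr_apply]
      rw [map_smul]
      rw [e.repr_self]
      by_cases h : i = j <;>
        simp [Matrix.diagonal_apply, EuclideanSpace.single_apply, h, hμdef, he]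
    have := LinearMap.det_toMatrix e.toBasis T
    rw [hmat, Matrix.det_diagonal] at this
    rw [this, hdetT]
  -- a large eigenvalue
  obtain ⟨j0, -, hj0max⟩ := Finset.exists_max_image Finset.univ μ ⟨⟨0, hn⟩, Finset.mem_univ _⟩
  have hnorm_le : ‖g‖ ≤ Real.sqrt (μ j0) := by
    apply ContinuousLinearMap.opNorm_le_bound _ (Real.sqrt_nonneg _)
    intro v
    have h1 : ‖g v‖ ^ 2 ≤ μ j0 * ‖v‖ ^ 2 := by
      rw [key, keyn, Finset.mul_sum]
      apply Finset.sum_le_sum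
      intro i _
      have h2 := hj0max i (Finset.mem_univ i)
      nlinarith [sq_nonneg (e.repr v i)]
    have h2 : ‖g v‖ ≤ Real.sqrt (μ j0 * ‖v‖ ^ 2) := by
      rw [← Real.sqrt_sq (norm_nonneg (g v))]
      exact Real.sqrt_le_sqrt h1
    calc ‖g v‖ ≤ Real.sqrt (μ j0 * ‖v‖ ^ 2) := h2
      _ = Real.sqrt (μ j0) * ‖v‖ := by
          rw [Real.sqrt_mul (hμ0 j0), Real.sqrt_sq (norm_nonneg v)]
  have hbig : ((ρ ^ 2) ^ n)⁻¹ < μ j0 := by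
    have h1 : (ρ ^ n)⁻¹ < Real.sqrt (μ j0) := lt_of_lt_of_le hg hnorm_le
    have h2 : ((ρ ^ n)⁻¹) ^ 2 < μ j0 := by
      have h3 := Real.sq_sqrt (hμ0 j0)
      have h4 : (0:ℝ) < (ρ ^ n)⁻¹ := by positivity
      nlinarith
    have h5 : ((ρ ^ 2) ^ n) = ((ρ ^ n) ^ 2) := by
      rw [← pow_mul, ← pow_mul, Nat.mul_comm]
    rw [h5, ← inv_pow]
    exact h2
  obtain ⟨c, hc0, ⟨j1, hj1⟩, ⟨j2, hj2⟩, hgap⟩ :=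
    gap_aux' (r := ρ ^ 2) (by positivity) (by nlinarith) μ hprodμ j0 hbig
  -- the invariant subspace
  set V : Submodule ℝ E := Submodule.span ℝ (⇑e '' {j | c ≤ μ j}) with hVdef
  have hVrepr : ∀ (j : Fin n), ¬ c ≤ μ j → ∀ v ∈ V, e.repr v j = 0 := by
    intro j hj v hv
    have hle : V ≤ LinearMap.ker ((innerSL ℝ (e j) : E →ₗ[ℝ] ℝ)) := by
      rw [hVdef, Submodule.span_le]
      rintro _ ⟨i, hi, rfl⟩
      have hij : j ≠ i := fun h => hj (h ▸ hi)
      simp only [SetLike.mem_coe, LinearMap.mem_ker, ContinuousLinearMap.coe_coe,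
        innerSL_apply_apply]
      exact e.orthonormal.2 hij
    have h0 : (inner ℝ (e j) v : ℝ) = 0 := hle hv
    rw [e.repr_apply_apply]
    exact h0
  have hVorth : ∀ q ∈ Vᗮ, ∀ (j : Fin n), c ≤ μ j → e.repr q j = 0 := by
    intro q hq j hj
    rw [e.repr_apply_apply]
    exact (Submodule.mem_orthogonal V q).mp hq (e j)
      (Submodule.subset_span ⟨j, hj, rfl⟩)
  have hlower : ∀ v ∈ V, c * ‖v‖ ^ 2 ≤ ‖g v‖ ^ 2 := by
    intro v hv
    rw [key, keyn, Finset.mul_sum]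
    apply Finset.sum_le_sum
    intro i _
    by_cases h : c ≤ μ i
    · nlinarith [sq_nonneg (e.repr v i)]
    · rw [hVrepr i h v hv]
      simp
  have hupper : ∀ q ∈ Vᗮ, q ≠ 0 → ‖g q‖ ^ 2 < ρ ^ 2 * c * ‖q‖ ^ 2 := by
    intro q hq hq0
    obtain ⟨i0, hi0⟩ : ∃ i, e.repr q i ≠ 0 := by
      by_contra hco
      push_neg at hco
      apply hq0
      apply e.repr.injective
      apply PiLp.ext
      intro i
      simp [hco i]
    have hi0S : ¬ c ≤ μ i0 := fun h => hi0 (hVorth q hq i0 h)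
    rw [key, keyn, Finset.mul_sum]
    apply Finset.sum_lt_sum
    · intro i _
      by_cases h : c ≤ μ i
      · rw [hVorth q hq i h]
        simp
      · have h1 : μ i < ρ ^ 2 * c := hgap i (not_le.mp h)
        nlinarith [sq_nonneg (e.repr q i)]
    · refine ⟨i0, Finset.mem_univ _, ?_⟩
      have h1 : μ i0 < ρ ^ 2 * c := hgap i0 (not_le.mp hi0S)
      have h2 : 0 < (e.repr q i0) ^ 2 := by positivity
      nlinarith
  set W : Submodule ℝ E := V.map g' with hWdef
  refine ⟨W, ?_, ?_, ?_⟩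
  · -- W ≠ ⊥
    rw [Submodule.ne_bot_iff]
    refine ⟨g' (e j1), Submodule.mem_map_of_mem (Submodule.subset_span ⟨j1, hj1, rfl⟩), ?_⟩
    intro h0
    have h1 := hμ j1
    rw [show g (e j1) = g' (e j1) from rfl, h0] at h1
    simp only [norm_zero] at h1
    nlinarith
  · -- W ≠ ⊤
    have hVne : V ≠ ⊤ := by
      intro h
      have hmem : e j2 ∈ V := h ▸ Submodule.mem_top
      have h0 := hVrepr j2 (not_le.mpr hj2) _ hmem
      rw [e.repr_self] at h0
      simp [EuclideanSpace.single_apply] at h0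
    have hVlt : Module.finrank ℝ V < n := by
      have := Submodule.finrank_lt (K := ℝ) (V := E) hVne
      rwa [hfr] at this
    intro h
    have h1 : Module.finrank ℝ W ≤ Module.finrank ℝ V := Submodule.finrank_map_le g' V
    rw [h, finrank_top, hfr] at h1
    omega
  · -- main estimate
    intro x hcomm hx1 w hw hw1
    obtain ⟨v, hvV, hgv⟩ := Submodule.mem_map.mp hw
    set p : V := V.orthogonalProjectionOnto (x v) with hpdef
    set q : E := x v - ↑p with hqdef
    have hqmem : q ∈ Vᗮ := Submodule.sub_starProjection_mem_orthogonal (K := V) (x v)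
    have hdecomp : x v = ↑p + q := by rw [hqdef]; abel
    have hxw : x w = g (x v) := by
      calc x w = x (g v) := by rw [← hgv]; rfl
        _ = (x * g) v := rfl
        _ = (g * x) v := by rw [hcomm]
        _ = g (x v) := rfl
    have hWp : g ↑p ∈ W := Submodule.mem_map_of_mem p.2
    have hd : Metric.infDist (x w) (W : Set E) ≤ ‖g q‖ := by
      have h1 : Metric.infDist (x w) (W : Set E) ≤ dist (x w) (g ↑p) :=
        Metric.infDist_le_dist_of_mem hWp
      rw [dist_eq_norm] at h1
      have h2 : x w - g ↑p = g q := by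
        rw [hxw, hdecomp, map_add]
        abel
      rwa [h2] at h1
    have hpq0 : (inner ℝ (↑p : E) q : ℝ) = 0 :=
      (Submodule.mem_orthogonal V q).mp hqmem ↑p p.2
    have hqle : ‖q‖ ≤ ‖x v‖ := by
      have h3 : ‖x v‖ ^ 2 = ‖(↑p : E)‖ ^ 2 + 2 * (inner ℝ (↑p : E) q : ℝ) + ‖q‖ ^ 2 := by
        rw [hdecomp]
        exact norm_add_sq_real _ _
      nlinarith [norm_nonneg q, norm_nonneg (x v), norm_nonneg (↑p : E), sq_nonneg ‖(↑p : E)‖]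
    have hxvle : ‖x v‖ ≤ ‖v‖ := by
      calc ‖x v‖ ≤ ‖x‖ * ‖v‖ := x.le_opNorm v
        _ ≤ 1 * ‖v‖ := mul_le_mul_of_nonneg_right hx1 (norm_nonneg v)
        _ = ‖v‖ := one_mul _
    have hv1 : c * ‖v‖ ^ 2 ≤ 1 := by
      have h4 := hlower v hvV
      have h5 : ‖g v‖ = ‖w‖ := by rw [← hgv]; rfl
      rw [h5] at h4
      nlinarith [norm_nonneg w]
    by_cases hq0 : q = 0
    · have h6 : ‖g q‖ = 0 := by rw [hq0, map_zero, norm_zero]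
      rw [h6] at hd
      exact lt_of_le_of_lt hd hρ0
    · have h6 := hupper q hqmem hq0
      have hqv : ‖q‖ ≤ ‖v‖ := hqle.trans hxvle
      have hq2 : ‖q‖ ^ 2 ≤ ‖v‖ ^ 2 := by nlinarith [norm_nonneg q]
      have h7a : ρ ^ 2 * c * ‖q‖ ^ 2 ≤ ρ ^ 2 * c * ‖v‖ ^ 2 :=
        mul_le_mul_of_nonneg_left hq2 (by positivity)
      have h7b : ρ ^ 2 * c * ‖v‖ ^ 2 ≤ ρ ^ 2 := by nlinarith [sq_nonneg ρ]
      have h7 : ‖g q‖ ^ 2 < ρ ^ 2 := lt_of_lt_of_le h6 (h7a.trans h7b)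
      have h8 : ‖g q‖ < ρ := lt_of_pow_lt_pow_left₀ 2 hρ0.le h7
      exact lt_of_le_of_lt hd h8
end

section
/- Let n be a positive integer. There exist constants K ≥ 1 and C ≥ 1 depending only on n such that for every 0 < ρ ≤ 1/2 the following holds. Let x, y ∈ Mat_n(ℝ) and suppose there exists g ∈ GL_n(ℂ) with g x g^{-1} = y and ‖g‖ + ‖g^{-1}‖ < ρ^{-1} (operator norms). Then there exists h ∈ GL_n(ℝ) with h x h^{-1} = y and ‖h‖ + ‖h^{-1}‖ ≤ K ρ^{-C}. -/
set_option maxHeartbeats 1600000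

/-- Operator norm of a square matrix over a normed ring `D`, acting by matrix-vector
multiplication on `Dᵐ` equipped with the `ℓ²`-norm. -/
noncomputable def matOpNorm {m : ℕ} {D : Type*} [NormedRing D]
    (M : Matrix (Fin m) (Fin m) D) : ℝ :=
  sSup ((fun v : PiLp 2 (fun _ : Fin m => D) =>
    ‖(WithLp.equiv 2 (Fin m → D)).symm (M.mulVec (WithLp.equiv 2 (Fin m → D) v))‖) ''
    Metric.closedBall 0 1)

open scoped Matrix.Norms.L2Operator
open Polynomial

section Aux

variable {m : ℕ} {𝕜 : Type*} [RCLike 𝕜]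

lemma matOpNorm_eq (M : Matrix (Fin m) (Fin m) 𝕜) : matOpNorm M = ‖M‖ := by
  rw [Matrix.cstar_norm_def, ← ContinuousLinearMap.sSup_unitClosedBall_eq_norm]
  unfold matOpNorm
  congr 1

lemma euclid_coord_le (w : EuclideanSpace 𝕜 (Fin m)) (i : Fin m) : ‖w i‖ ≤ ‖w‖ := by
  rw [EuclideanSpace.norm_eq]
  rw [show ‖w i‖ = Real.sqrt (‖w i‖ ^ 2) by rw [Real.sqrt_sq (norm_nonneg _)]]
  apply Real.sqrt_le_sqrt
  exact Finset.single_le_sum (fun k _ => sq_nonneg ‖w k‖) (Finset.mem_univ i)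

lemma entry_le_opNorm (M : Matrix (Fin m) (Fin m) 𝕜) (i j : Fin m) : ‖M i j‖ ≤ ‖M‖ := by
  have h := Matrix.l2_opNorm_mulVec M (EuclideanSpace.single j (1:𝕜))
  rw [EuclideanSpace.norm_single, norm_one, mul_one] at h
  refine le_trans ?_ h
  calc ‖M i j‖ = ‖((WithLp.equiv 2 (Fin m → 𝕜)).symm (M.mulVec (EuclideanSpace.single j 1))) i‖ := by
        congr 1
        show M i j = M.mulVec (EuclideanSpace.single j 1) i
        simp [Matrix.mulVec, dotProduct, EuclideanSpace.single_apply]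
    _ ≤ _ := euclid_coord_le _ i

lemma opNorm_le_sum (M : Matrix (Fin m) (Fin m) 𝕜) :
    ‖M‖ ≤ ∑ i : Fin m, ∑ j : Fin m, ‖M i j‖ := by
  have hstd : ∀ i j : Fin m, ‖(Matrix.single i j (1:𝕜))‖ ≤ 1 := by
    intro i j
    rw [Matrix.cstar_norm_def]
    refine ContinuousLinearMap.opNorm_le_bound _ zero_le_one fun v => ?_
    rw [one_mul]
    have hv : v = (WithLp.equiv 2 (Fin m → 𝕜)).symm (WithLp.equiv 2 _ v) := by simp
    rw [hv, WithLp.equiv_symm_apply, Matrix.toEuclideanCLM_toLp, ← WithLp.equiv_symm_apply]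
    have hmv : (Matrix.single i j (1:𝕜)).mulVec (WithLp.equiv 2 _ v)
        = Pi.single i ((WithLp.equiv 2 (Fin m → 𝕜) v) j) := by
      ext k
      by_cases hik : i = k <;>
        simp [Matrix.mulVec, dotProduct, Matrix.single, Pi.single_apply, hik,
          Finset.sum_ite_eq]
    rw [hmv]
    rw [show ((WithLp.equiv 2 (Fin m → 𝕜)).symm (Pi.single i ((WithLp.equiv 2 (Fin m → 𝕜) v) j)))
      = EuclideanSpace.single i ((WithLp.equiv 2 (Fin m → 𝕜) v) j) from rfl]
    rw [EuclideanSpace.norm_single]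
    simpa using euclid_coord_le v j
  have hsm : ∀ i j : Fin m, Matrix.single i j (M i j) = M i j • Matrix.single i j (1:𝕜) := by
    intro i j; ext a b; simp [Matrix.single, Matrix.smul_apply, mul_ite]
  calc ‖M‖ = ‖∑ i : Fin m, ∑ j : Fin m, M i j • Matrix.single i j (1:𝕜)‖ := by
        congr 1
        rw [show (∑ i : Fin m, ∑ j : Fin m, M i j • Matrix.single i j (1:𝕜))
          = ∑ i : Fin m, ∑ j : Fin m, Matrix.single i j (M i j) from
          Finset.sum_congr rfl fun i _ => Finset.sum_congr rfl fun j _ => (hsm i j).symm]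
        exact Matrix.matrix_eq_sum_single M
    _ ≤ ∑ i : Fin m, ‖∑ j : Fin m, M i j • Matrix.single i j (1:𝕜)‖ :=
        norm_sum_le _ _
    _ ≤ ∑ i : Fin m, ∑ j : Fin m, ‖M i j • Matrix.single i j (1:𝕜)‖ :=
        Finset.sum_le_sum fun i _ => norm_sum_le _ _
    _ ≤ ∑ i : Fin m, ∑ j : Fin m, ‖M i j‖ := by
        refine Finset.sum_le_sum fun i _ => Finset.sum_le_sum fun j _ => ?_
        rw [norm_smul]
        nlinarith [hstd i j, norm_nonneg (M i j)]

lemma det_bound (M : Matrix (Fin m) (Fin m) 𝕜) {E : ℝ}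
    (h : ∀ i j, ‖M i j‖ ≤ E) : ‖M.det‖ ≤ (Nat.factorial m) * E ^ m := by
  rw [Matrix.det_apply]
  calc ‖∑ σ : Equiv.Perm (Fin m), Equiv.Perm.sign σ • ∏ i, M (σ i) i‖
      ≤ ∑ σ : Equiv.Perm (Fin m), ‖Equiv.Perm.sign σ • ∏ i, M (σ i) i‖ := norm_sum_le _ _
    _ ≤ ∑ _σ : Equiv.Perm (Fin m), E ^ m := by
        refine Finset.sum_le_sum fun σ _ => ?_
        have hsign : ‖Equiv.Perm.sign σ • ∏ i, M (σ i) i‖ = ‖∏ i, M (σ i) i‖ := by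
          rcases Int.units_eq_one_or (Equiv.Perm.sign σ) with hs | hs <;>
            simp [hs, Units.smul_def]
        rw [hsign]
        calc ‖∏ i, M (σ i) i‖ = ∏ i : Fin m, ‖M (σ i) i‖ := norm_prod _ _
          _ ≤ ∏ _i : Fin m, E := Finset.prod_le_prod (fun i _ => norm_nonneg _)
              (fun i _ => h _ _)
          _ = E ^ m := by simp
    _ = (Nat.factorial m) * E ^ m := by
        simp [Finset.sum_const, Fintype.card_perm, mul_comm]

end Aux

lemma exists_good_node (n : ℕ) : ∃ B : ℝ, 1 ≤ B ∧ ∀ q : Polynomial ℂ, q.degree < (n+1 : ℕ) →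
    ∃ j ∈ Finset.range (n+1), ‖q.eval (Complex.I)‖ ≤ B * ‖q.eval (j : ℂ)‖ := by
  classical
  set s : Finset ℕ := Finset.range (n+1) with hs
  set v : ℕ → ℂ := fun k => (k : ℂ) with hv
  have hinj : Set.InjOn v s := fun a _ b _ h => Nat.cast_injective h
  set B : ℝ := (∑ j ∈ s, ‖(Lagrange.basis s v j).eval Complex.I‖) + 1 with hB
  have hB1 : 1 ≤ B := by
    have : 0 ≤ ∑ j ∈ s, ‖(Lagrange.basis s v j).eval Complex.I‖ :=
      Finset.sum_nonneg fun j _ => norm_nonneg _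
    linarith
  refine ⟨B, hB1, fun q hq => ?_⟩
  have hcard : (s.card : WithBot ℕ) = ((n+1 : ℕ) : WithBot ℕ) := by simp [hs]
  have hqi : q = Lagrange.interpolate s v (fun j => q.eval (v j)) := by
    refine Lagrange.eq_interpolate hinj ?_
    rw [hcard]; exact hq
  have heval : q.eval Complex.I = ∑ j ∈ s, q.eval (v j) * (Lagrange.basis s v j).eval Complex.I := by
    conv_lhs => rw [hqi]
    rw [Lagrange.interpolate_apply, Polynomial.eval_finset_sum]
    exact Finset.sum_congr rfl fun j _ => by rw [Polynomial.eval_mul, Polynomial.eval_C]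
  by_contra hcon
  push_neg at hcon
  rcases eq_or_ne (q.eval Complex.I) 0 with h0 | h0
  · have := hcon 0 (by simp [hs])
    have : ¬ (0 ≤ B * ‖q.eval ((0:ℕ) : ℂ)‖) := by
      rw [h0] at this; simpa using this
    exact this (mul_nonneg (by linarith) (norm_nonneg _))
  · have hr : 0 < ‖q.eval Complex.I‖ / B := div_pos (norm_pos_iff.mpr h0) (by linarith)
    have hsum : ‖q.eval Complex.I‖ ≤ ∑ j ∈ s, ‖q.eval (v j)‖ * ‖(Lagrange.basis s v j).eval Complex.I‖ := by
      rw [heval]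
      refine le_trans (norm_sum_le _ _) ?_
      exact Finset.sum_le_sum fun j _ => le_of_eq (norm_mul _ _)
    have hlt : ∑ j ∈ s, ‖q.eval (v j)‖ * ‖(Lagrange.basis s v j).eval Complex.I‖
        ≤ (‖q.eval Complex.I‖ / B) * (B - 1) := by
      have : ∀ j ∈ s, ‖q.eval (v j)‖ * ‖(Lagrange.basis s v j).eval Complex.I‖
          ≤ (‖q.eval Complex.I‖ / B) * ‖(Lagrange.basis s v j).eval Complex.I‖ := by
        intro j hj
        refine mul_le_mul_of_nonneg_right ?_ (norm_nonneg _)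
        have := hcon j hj
        rw [le_div_iff₀ (by linarith : (0:ℝ) < B), mul_comm]
        exact le_of_lt this
      refine le_trans (Finset.sum_le_sum this) ?_
      rw [← Finset.mul_sum, hB]
      ring_nf
      exact le_of_eq rfl
    have : ‖q.eval Complex.I‖ ≤ (‖q.eval Complex.I‖ / B) * (B - 1) := le_trans hsum hlt
    have hfin : (‖q.eval Complex.I‖ / B) * (B - 1) < (‖q.eval Complex.I‖ / B) * B :=
      mul_lt_mul_of_pos_left (by linarith) hr
    rw [div_mul_cancel₀ _ (by linarith : B ≠ 0)] at hfin
    linarith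

/-- **Lemma 5.4**: two real matrices conjugate by a complex matrix `g` with
`‖g‖ + ‖g⁻¹‖ < ρ⁻¹` are conjugate by a real matrix `h` with `‖h‖ + ‖h⁻¹‖ ≤ K ρ^{-C}`. -/
theorem real_conjugacy_from_complex_conjugacy (n : ℕ) (hn : 0 < n) :
    ∃ K : ℝ, 1 ≤ K ∧ ∃ C : ℝ, 1 ≤ C ∧
      ∀ ρ : ℝ, 0 < ρ → ρ ≤ 1 / 2 →
        ∀ x y : Matrix (Fin n) (Fin n) ℝ,
          ∀ g : Matrix.GeneralLinearGroup (Fin n) ℂ,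
            ((↑g : Matrix (Fin n) (Fin n) ℂ) * x.map Complex.ofReal *
                (↑g⁻¹ : Matrix (Fin n) (Fin n) ℂ) = y.map Complex.ofReal) →
            matOpNorm (↑g : Matrix (Fin n) (Fin n) ℂ) +
                matOpNorm (↑g⁻¹ : Matrix (Fin n) (Fin n) ℂ) < ρ⁻¹ →
            ∃ h : Matrix.GeneralLinearGroup (Fin n) ℝ,
              ((↑h : Matrix (Fin n) (Fin n) ℝ) * x * (↑h⁻¹ : Matrix (Fin n) (Fin n) ℝ) = y) ∧
              matOpNorm (↑h : Matrix (Fin n) (Fin n) ℝ) +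
                  matOpNorm (↑h⁻¹ : Matrix (Fin n) (Fin n) ℝ) ≤ K * ρ ^ (-C) := by
  classical
  obtain ⟨B, hB1, hBnode⟩ := exists_good_node n
  set nf : ℝ := (Nat.factorial n : ℝ) with hnf
  have hnf1 : 1 ≤ nf := by
    rw [hnf]; exact_mod_cast Nat.one_le_iff_ne_zero.mpr (Nat.factorial_ne_zero n)
  have hn1 : (1:ℝ) ≤ (n:ℝ) := by exact_mod_cast hn
  refine ⟨(n:ℝ)^2 * ((n:ℝ)+1) + (n:ℝ)^2 * B * nf * nf * ((n:ℝ)+1)^n + 1, ?_, ((2*n : ℕ) : ℝ), ?_, ?_⟩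
  · have h1 : (0:ℝ) ≤ (n:ℝ)^2 * ((n:ℝ)+1) := by positivity
    have h2 : (0:ℝ) ≤ (n:ℝ)^2 * B * nf * nf * ((n:ℝ)+1)^n := by
      have hB0 : (0:ℝ) ≤ B := by linarith
      have hnf0 : (0:ℝ) ≤ nf := by linarith
      positivity
    linarith
  · exact_mod_cast Nat.one_le_iff_ne_zero.mpr (by omega)
  intro ρ hρ hρ2 x y g hconj hnorm
  set G : Matrix (Fin n) (Fin n) ℂ := (↑g : Matrix (Fin n) (Fin n) ℂ) with hG
  set Gi : Matrix (Fin n) (Fin n) ℂ := (↑g⁻¹ : Matrix (Fin n) (Fin n) ℂ) with hGi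
  set r : ℝ := ρ⁻¹ with hrdef
  have hr0 : 0 < r := inv_pos.mpr hρ
  have hr2 : 2 ≤ r := by
    rw [hrdef]
    rw [show (2:ℝ) = (1/2)⁻¹ by norm_num]
    exact inv_anti₀ hρ hρ2
  -- norms of G, Gi
  rw [matOpNorm_eq, matOpNorm_eq] at hnorm
  have hGn : ‖G‖ ≤ r := le_of_lt (lt_of_le_of_lt (le_add_of_nonneg_right (norm_nonneg _)) hnorm)
  have hGin : ‖Gi‖ ≤ r := le_of_lt (lt_of_le_of_lt (le_add_of_nonneg_left (norm_nonneg _)) hnorm)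
  -- group identities
  have hGGi : G * Gi = 1 := by
    rw [hG, hGi]
    exact_mod_cast Units.mul_inv g
  have hGiG : Gi * G = 1 := by
    rw [hG, hGi]
    exact_mod_cast Units.inv_mul g
  -- intertwining equation
  have hGX : G * x.map Complex.ofReal = y.map Complex.ofReal * G := by
    have := congrArg (fun M => M * G) hconj
    simpa [mul_assoc, hGiG] using this
  -- real and imaginary parts
  set A : Matrix (Fin n) (Fin n) ℝ := G.map Complex.re with hA
  set Bm : Matrix (Fin n) (Fin n) ℝ := G.map Complex.im with hBm
  have key : ∀ i j, (∑ k, G i k * (x k j : ℂ)) = ∑ k, (y i k : ℂ) * G k j := by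
    intro i j
    have := congrFun (congrFun hGX i) j
    simpa [Matrix.mul_apply, Matrix.map_apply] using this
  have hAx : A * x = y * A := by
    ext i j
    have := congrArg Complex.re (key i j)
    rw [Complex.re_sum, Complex.re_sum] at this
    simpa [hA, Matrix.mul_apply, Matrix.map_apply, Complex.mul_re] using this
  have hBx : Bm * x = y * Bm := by
    ext i j
    have := congrArg Complex.im (key i j)
    rw [Complex.im_sum, Complex.im_sum] at this
    simpa [hBm, Matrix.mul_apply, Matrix.map_apply, Complex.mul_im] using this
  -- the polynomial
  set q : Polynomial ℝ :=
    ((X : ℝ[X]) • Bm.map Polynomial.C + A.map Polynomial.C).det with hq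
  have hqdeg : q.natDegree ≤ n := by
    have := Polynomial.natDegree_det_X_add_C_le Bm A
    simpa using this
  set qc : Polynomial ℂ := q.map (algebraMap ℝ ℂ) with hqc
  have hqcdeg : qc.degree < ((n+1 : ℕ) : WithBot ℕ) := by
    refine lt_of_le_of_lt (Polynomial.degree_map_le) ?_
    refine lt_of_le_of_lt (Polynomial.degree_le_natDegree) ?_
    exact_mod_cast lt_of_le_of_lt hqdeg (lt_add_one n)
  -- evaluation at I gives det G
  have hdetG : qc.eval Complex.I = G.det := by
    have h1 : qc.eval Complex.I = (Polynomial.aeval Complex.I) q := by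
      rw [hqc, Polynomial.eval_map, Polynomial.aeval_def]
    rw [h1, hq]
    rw [AlgHom.map_det]
    congr 1
    ext i j
    simp only [AlgHom.mapMatrix_apply, Matrix.map_apply, Matrix.add_apply, Matrix.smul_apply,
      smul_eq_mul, map_add, map_mul, Polynomial.aeval_X, Polynomial.aeval_C]
    rw [show A i j = (G i j).re from rfl, show Bm i j = (G i j).im from rfl]
    rw [mul_comm, add_comm]
    exact Complex.re_add_im (G i j)
  have hB0 : (0:ℝ) < B := by linarith
  -- lower bound on ‖det G‖
  have hdetGi_le : ‖Gi.det‖ ≤ nf * r^n :=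
    det_bound Gi (fun i j => le_trans (entry_le_opNorm Gi i j) hGin)
  have hdetGGi : G.det * Gi.det = 1 := by rw [← Matrix.det_mul, hGGi, Matrix.det_one]
  have hdetGi_ne : Gi.det ≠ 0 := by
    intro h0; rw [h0, mul_zero] at hdetGGi; exact one_ne_zero hdetGGi.symm
  have hdetGipos : 0 < ‖Gi.det‖ := norm_pos_iff.mpr hdetGi_ne
  have hdetG_eq : ‖G.det‖ = ‖Gi.det‖⁻¹ := by
    have h2 : ‖G.det‖ * ‖Gi.det‖ = 1 := by rw [← norm_mul, hdetGGi, norm_one]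
    calc ‖G.det‖ = ‖G.det‖ * (‖Gi.det‖ * ‖Gi.det‖⁻¹) := by
          rw [mul_inv_cancel₀ hdetGipos.ne', mul_one]
      _ = (‖G.det‖ * ‖Gi.det‖) * ‖Gi.det‖⁻¹ := by ring
      _ = ‖Gi.det‖⁻¹ := by rw [h2, one_mul]
  have hdetG_lb : (nf * r^n)⁻¹ ≤ ‖G.det‖ := by
    rw [hdetG_eq]
    exact inv_anti₀ hdetGipos hdetGi_le
  -- node selection
  obtain ⟨j, hjmem, hIj⟩ := hBnode qc hqcdeg
  set t : ℝ := (j : ℝ) with ht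
  have hjn : j ≤ n := by
    have := Finset.mem_range.mp hjmem; omega
  have htn : |t| ≤ (n:ℝ) := by
    rw [ht, abs_of_nonneg (by positivity)]
    exact_mod_cast hjn
  have hqct : qc.eval ((j:ℕ) : ℂ) = ((q.eval t : ℝ) : ℂ) := by
    rw [hqc, Polynomial.eval_map]
    rw [show ((j:ℕ):ℂ) = algebraMap ℝ ℂ t by rw [ht]; push_cast; rfl]
    exact Polynomial.eval₂_at_apply _ _
  have hqt_lb : (B * (nf * r^n))⁻¹ ≤ |q.eval t| := by
    rw [hdetG, hqct] at hIj
    rw [Complex.norm_real, Real.norm_eq_abs] at hIj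
    have h5 : (nf * r^n)⁻¹ ≤ B * |q.eval t| := le_trans hdetG_lb hIj
    rw [mul_inv]
    rw [inv_mul_le_iff₀ hB0] at *
    nlinarith [abs_nonneg (q.eval t)]
  -- the real conjugating matrix
  set hM : Matrix (Fin n) (Fin n) ℝ := A + t • Bm with hhM
  have hdet_h : hM.det = q.eval t := by
    have hmap : ((X : ℝ[X]) • Bm.map Polynomial.C + A.map Polynomial.C).map
        (Polynomial.evalRingHom t) = hM := by
      ext i j
      simp only [Matrix.map_apply, Matrix.add_apply, Matrix.smul_apply, smul_eq_mul,
        Polynomial.coe_evalRingHom, Polynomial.eval_add, Polynomial.eval_mul, Polynomial.eval_X,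
        Polynomial.eval_C]
      rw [hhM, Matrix.add_apply, Matrix.smul_apply, smul_eq_mul]
      ring
    have := RingHom.map_det (Polynomial.evalRingHom t)
      ((X : ℝ[X]) • Bm.map Polynomial.C + A.map Polynomial.C)
    rw [RingHom.mapMatrix_apply, hmap] at this
    rw [← this, hq]
    simp [Polynomial.coe_evalRingHom]
  have hqtpos : 0 < (B * (nf * r^n))⁻¹ := by positivity
  have hdet_ne : hM.det ≠ 0 := by
    rw [hdet_h]
    intro h0
    rw [h0, abs_zero] at hqt_lb
    linarith
  have hx2 : hM * x = y * hM := by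
    rw [hhM, add_mul, Matrix.smul_mul, hAx, hBx, mul_add, Matrix.mul_smul]
  obtain ⟨u, huu⟩ := (Matrix.isUnit_iff_isUnit_det hM).mpr (isUnit_iff_ne_zero.mpr hdet_ne)
  have hinvu : (↑u⁻¹ : Matrix (Fin n) (Fin n) ℝ) = hM⁻¹ := by
    rw [Matrix.coe_units_inv, huu]
  refine ⟨u, ?_, ?_⟩
  · rw [huu, hinvu]
    calc hM * x * hM⁻¹ = y * hM * hM⁻¹ := by rw [hx2]
      _ = y := by
          rw [mul_assoc, Matrix.mul_nonsing_inv _ (isUnit_iff_ne_zero.mpr hdet_ne), mul_one]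
  · rw [matOpNorm_eq, matOpNorm_eq, huu, hinvu]
    -- entry bounds for hM
    have hent : ∀ i j, ‖hM i j‖ ≤ ((n:ℝ)+1) * r := by
      intro i j
      have h1 : |A i j| ≤ r := by
        refine le_trans ?_ (le_trans (entry_le_opNorm G i j) hGn)
        rw [show A i j = (G i j).re from rfl]
        exact Complex.abs_re_le_norm _
      have h2 : |Bm i j| ≤ r := by
        refine le_trans ?_ (le_trans (entry_le_opNorm G i j) hGn)
        rw [show Bm i j = (G i j).im from rfl]
        exact Complex.abs_im_le_norm _
      rw [Real.norm_eq_abs, show hM i j = A i j + t * Bm i j from rfl]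
      calc |A i j + t * Bm i j| ≤ |A i j| + |t| * |Bm i j| := by
            refine le_trans (abs_add_le _ _) ?_
            rw [abs_mul]
        _ ≤ ((n:ℝ)+1) * r := by nlinarith [abs_nonneg (Bm i j), abs_nonneg t]
    have hent1 : (1:ℝ) ≤ ((n:ℝ)+1) * r := by nlinarith
    have hsumbound : ∀ (M : Matrix (Fin n) (Fin n) ℝ) (c : ℝ), (∀ i j, ‖M i j‖ ≤ c) →
        ‖M‖ ≤ (n:ℝ)^2 * c := by
      intro M c hc
      refine le_trans (opNorm_le_sum M) ?_
      calc ∑ i : Fin n, ∑ j : Fin n, ‖M i j‖ ≤ ∑ _i : Fin n, ∑ _j : Fin n, c :=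
            Finset.sum_le_sum fun i _ => Finset.sum_le_sum fun j _ => hc i j
        _ = (n:ℝ)^2 * c := by
            simp [Finset.sum_const, Finset.card_univ]
            ring
    have hnormh : ‖hM‖ ≤ (n:ℝ)^2 * (((n:ℝ)+1) * r) := hsumbound _ _ hent
    -- adjugate entries
    have hadj : ∀ i j, ‖hM.adjugate i j‖ ≤ nf * (((n:ℝ)+1)*r)^n := by
      intro i j
      rw [Matrix.adjugate_apply]
      refine det_bound _ (fun a b => ?_)
      rw [Matrix.updateRow_apply]
      by_cases hb : a = j
      · rw [if_pos hb, Real.norm_eq_abs, Pi.single_apply]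
        by_cases hbi : b = i
        · rw [if_pos hbi, abs_one]; exact hent1
        · rw [if_neg hbi, abs_zero]; linarith
      · rw [if_neg hb]; exact hent a b
    have hdlb : (B * (nf * r^n))⁻¹ ≤ |hM.det| := by rw [hdet_h]; exact hqt_lb
    have hdinv : |hM.det|⁻¹ ≤ B * (nf * r^n) := by
      have := inv_anti₀ hqtpos hdlb
      rwa [inv_inv] at this
    have hinvdef : hM⁻¹ = (hM.det)⁻¹ • hM.adjugate := by
      rw [Matrix.inv_def, Ring.inverse_eq_inv']
    have hentinv : ∀ i j, ‖hM⁻¹ i j‖ ≤ (B * (nf * r^n)) * (nf * (((n:ℝ)+1)*r)^n) := by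
      intro i j
      rw [hinvdef, Matrix.smul_apply, smul_eq_mul, Real.norm_eq_abs, abs_mul, abs_inv]
      have hadjnn : (0:ℝ) ≤ |hM.adjugate i j| := abs_nonneg _
      have := hadj i j
      rw [Real.norm_eq_abs] at this
      have hEn : (0:ℝ) ≤ nf * (((n:ℝ)+1)*r)^n := by positivity
      exact mul_le_mul hdinv this hadjnn (by positivity)
    have hnormhi : ‖hM⁻¹‖ ≤ (n:ℝ)^2 * ((B * (nf * r^n)) * (nf * (((n:ℝ)+1)*r)^n)) :=
      hsumbound _ _ hentinv
    -- final arithmetic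
    have hrpow : ρ ^ (-((2*n:ℕ):ℝ)) = r^(2*n) := by
      rw [Real.rpow_neg hρ.le, Real.rpow_natCast]
      rw [show r = ρ⁻¹ from hrdef, inv_pow]
    rw [hrpow]
    have hr1 : (1:ℝ) ≤ r := by linarith
    have hrr : r ≤ r^(2*n) := by
      calc r = r^1 := (pow_one r).symm
        _ ≤ r^(2*n) := pow_le_pow_right₀ hr1 (by omega)
    have hp2 : r^n * r^n = r^(2*n) := by rw [two_mul, pow_add]
    have hmulpow : (((n:ℝ)+1)*r)^n = ((n:ℝ)+1)^n * r^n := mul_pow _ _ _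
    have hrnn : (0:ℝ) ≤ r^n := by positivity
    have h2nn : (0:ℝ) ≤ r^(2*n) := by positivity
    have hfin1 : ‖hM‖ ≤ ((n:ℝ)^2 * ((n:ℝ)+1)) * r^(2*n) := by
      refine le_trans hnormh ?_
      have : (n:ℝ)^2 * (((n:ℝ)+1) * r) = ((n:ℝ)^2 * ((n:ℝ)+1)) * r := by ring
      rw [this]
      have hc : (0:ℝ) ≤ (n:ℝ)^2 * ((n:ℝ)+1) := by positivity
      exact mul_le_mul_of_nonneg_left hrr hc
    have hfin2 : ‖hM⁻¹‖ ≤ ((n:ℝ)^2 * B * nf * nf * ((n:ℝ)+1)^n) * r^(2*n) := by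
      refine le_trans hnormhi (le_of_eq ?_)
      rw [hmulpow, ← hp2]
      ring
    have hKnn : (0:ℝ) ≤ r^(2*n) := h2nn
    nlinarith [hfin1, hfin2]
end
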